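/- Let D be a probability distribution on ℝᵈ, let w, w* be unit vectors with θ = ∠(w, w*) ∈ (0, π/4], let k ≥ 2 be an even integer, and suppose: (a) for every unit vector u, E_{x∼D}[⟨u,x⟩^k] ≤ (C₁k)^{k/2}; (b) for σ := (C₁k)^{k/(2(k+1))} · (tan θ)^{k/(k+1)}, P_{x∼D}[|⟨w,x⟩| ≤ σ] ≤ C₃σ. Then P_{x∼D}[sign(⟨w,x⟩) ≠ sign(⟨w*,x⟩)] ≤ C₃σ + (C₁k)^{k/2}(tan θ)^k / σ^k = (C₃ + 1) · (C₁k)^{k/(2(k+1))} · (tan θ)^{k/(k+1)}. -/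

import Mathlib

open MeasureTheory Set Real

noncomputable def sgn (t : ℝ) : ℝ := if 0 ≤ t then 1 else -1

set_option maxHeartbeats 2000000 in
/-- Bounding the disagreement probability of `w` and `w*` via a band plus a Markov tail:
with `σ = (C₁k)^{k/(2(k+1))} (tan θ)^{k/(k+1)}`, the disagreement probability is at most
`C₃σ + (C₁k)^{k/2}(tan θ)^k/σ^k`, which equals `(C₃+1)(C₁k)^{k/(2(k+1))}(tan θ)^{k/(k+1)}`. -/
theorem disagreement_prob_bound {d : ℕ}
    (μ : Measure (EuclideanSpace ℝ (Fin d))) [IsProbabilityMeasure μ]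
    (w wstar : EuclideanSpace ℝ (Fin d)) (hw : ‖w‖ = 1) (hwstar : ‖wstar‖ = 1)
    (k : ℕ) (hk : Even k) (hk2 : 2 ≤ k) (C₁ C₃ : ℝ) (hC₁ : 0 < C₁) (hC₃ : 0 < C₃)
    (hθ : Real.arccos (inner ℝ w wstar : ℝ) ∈ Ioc 0 (π / 4))
    (hmom : ∀ u : EuclideanSpace ℝ (Fin d), ‖u‖ = 1 →
      Integrable (fun x => (inner ℝ u x : ℝ) ^ k) μ ∧
      ∫ x, (inner ℝ u x : ℝ) ^ k ∂μ ≤ (C₁ * k) ^ ((k : ℝ) / 2))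
    (hband : (μ {x | |(inner ℝ w x : ℝ)| ≤
        (C₁ * k) ^ ((k : ℝ) / (2 * (k + 1)))
          * Real.tan (Real.arccos (inner ℝ w wstar : ℝ)) ^ ((k : ℝ) / (k + 1))}).toReal
      ≤ C₃ * ((C₁ * k) ^ ((k : ℝ) / (2 * (k + 1)))
          * Real.tan (Real.arccos (inner ℝ w wstar : ℝ)) ^ ((k : ℝ) / (k + 1)))) :
    (μ {x | sgn (inner ℝ w x : ℝ) ≠ sgn (inner ℝ wstar x : ℝ)}).toReal
        ≤ C₃ * ((C₁ * k) ^ ((k : ℝ) / (2 * (k + 1)))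
            * Real.tan (Real.arccos (inner ℝ w wstar : ℝ)) ^ ((k : ℝ) / (k + 1)))
          + (C₁ * k) ^ ((k : ℝ) / 2) * Real.tan (Real.arccos (inner ℝ w wstar : ℝ)) ^ k
            / ((C₁ * k) ^ ((k : ℝ) / (2 * (k + 1)))
              * Real.tan (Real.arccos (inner ℝ w wstar : ℝ)) ^ ((k : ℝ) / (k + 1))) ^ k ∧
      C₃ * ((C₁ * k) ^ ((k : ℝ) / (2 * (k + 1)))
            * Real.tan (Real.arccos (inner ℝ w wstar : ℝ)) ^ ((k : ℝ) / (k + 1)))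
          + (C₁ * k) ^ ((k : ℝ) / 2) * Real.tan (Real.arccos (inner ℝ w wstar : ℝ)) ^ k
            / ((C₁ * k) ^ ((k : ℝ) / (2 * (k + 1)))
              * Real.tan (Real.arccos (inner ℝ w wstar : ℝ)) ^ ((k : ℝ) / (k + 1))) ^ k
        = (C₃ + 1) * ((C₁ * k) ^ ((k : ℝ) / (2 * (k + 1)))
            * Real.tan (Real.arccos (inner ℝ w wstar : ℝ)) ^ ((k : ℝ) / (k + 1))) := by
  obtain ⟨hθ0, hθ4⟩ := hθ
  set θ : ℝ := Real.arccos (inner ℝ w wstar : ℝ) with hθdef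
  have hkpos : (0 : ℝ) < (k : ℝ) := by
    have : (0:ℕ) < k := by omega
    exact_mod_cast this
  have hA : (0 : ℝ) < C₁ * k := by positivity
  have hcospos : 0 < Real.cos θ := by
    apply Real.cos_pos_of_mem_Ioo
    constructor
    · linarith [Real.pi_pos]
    · linarith [Real.pi_pos]
  have hsinpos : 0 < Real.sin θ := by
    apply Real.sin_pos_of_pos_of_lt_pi hθ0
    linarith [Real.pi_pos]
  have htan : Real.tan θ = Real.sin θ / Real.cos θ := Real.tan_eq_sin_div_cos θ
  have htanpos : 0 < Real.tan θ := by rw [htan]; positivity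
  set T : ℝ := Real.tan θ with hTdef
  set A : ℝ := C₁ * k with hAdef
  set σ : ℝ := A ^ ((k : ℝ) / (2 * (k + 1))) * T ^ ((k : ℝ) / (k + 1)) with hσdef
  have hσpos : 0 < σ :=
    mul_pos (Real.rpow_pos_of_pos hA _) (Real.rpow_pos_of_pos htanpos _)
  -- the algebraic identity
  have hident : A ^ ((k : ℝ) / 2) * T ^ k / σ ^ k = σ := by
    rw [div_eq_iff (pow_ne_zero _ hσpos.ne')]
    have hσk : σ ^ k = A ^ ((k : ℝ) / (2 * (k + 1)) * k) * T ^ ((k : ℝ) / (k + 1) * k) := by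
      rw [hσdef, mul_pow, ← Real.rpow_natCast (A ^ ((k : ℝ) / (2 * (k + 1)))) k,
        ← Real.rpow_natCast (T ^ ((k : ℝ) / (k + 1))) k,
        ← Real.rpow_mul hA.le, ← Real.rpow_mul htanpos.le]
    have hTk : T ^ k = T ^ (k : ℝ) := (Real.rpow_natCast T k).symm
    rw [hσk, hσdef, hTk, mul_mul_mul_comm, ← Real.rpow_add hA, ← Real.rpow_add htanpos]
    have hk1 : (0:ℝ) < (k:ℝ) + 1 := by positivity
    congr 1
    · congr 1; field_simp; ring
    · congr 1; field_simp; ring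
  -- the orthogonal direction v
  set v : EuclideanSpace ℝ (Fin d) :=
    (Real.sin θ)⁻¹ • (wstar - Real.cos θ • w) with hvdef
  have hinner1 : |(inner ℝ w wstar : ℝ)| ≤ 1 := by
    have := abs_real_inner_le_norm w wstar
    rwa [hw, hwstar, one_mul] at this
  have hcosθ : Real.cos θ = (inner ℝ w wstar : ℝ) := by
    rw [hθdef]
    exact Real.cos_arccos (neg_le_of_abs_le hinner1) (le_of_abs_le hinner1)
  have h1 : ‖wstar - Real.cos θ • w‖ ^ 2 = Real.sin θ ^ 2 := by
    have e1 : ‖wstar - Real.cos θ • w‖ ^ 2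
        = ‖wstar‖ ^ 2 - 2 * (inner ℝ wstar (Real.cos θ • w) : ℝ) + ‖Real.cos θ • w‖ ^ 2 :=
      norm_sub_sq_real _ _
    have e2 : (inner ℝ wstar (Real.cos θ • w) : ℝ) = Real.cos θ * (inner ℝ wstar w : ℝ) :=
      real_inner_smul_right _ _ _
    have e3 : (inner ℝ wstar w : ℝ) = Real.cos θ := by
      rw [real_inner_comm]; exact hcosθ.symm
    have e4 : ‖Real.cos θ • w‖ = Real.cos θ := by
      rw [norm_smul, hw, Real.norm_eq_abs, abs_of_pos hcospos, mul_one]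
    have h2 := Real.sin_sq_add_cos_sq θ
    rw [e1, e2, e3, e4, hwstar]
    nlinarith
  have hnormsub : ‖wstar - Real.cos θ • w‖ = Real.sin θ := by
    rw [← Real.sqrt_sq (norm_nonneg _), h1, Real.sqrt_sq hsinpos.le]
  have hvnorm : ‖v‖ = 1 := by
    rw [hvdef, norm_smul, hnormsub, Real.norm_eq_abs, abs_of_pos (inv_pos.mpr hsinpos),
      inv_mul_cancel₀ hsinpos.ne']
  have hvx : ∀ x : EuclideanSpace ℝ (Fin d),
      (inner ℝ v x : ℝ) = (Real.sin θ)⁻¹ * ((inner ℝ wstar x : ℝ) - Real.cos θ * (inner ℝ w x : ℝ)) := by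
    intro x
    rw [hvdef, real_inner_smul_left, inner_sub_left, real_inner_smul_left]
  -- geometric claim
  have hgeo : ∀ x : EuclideanSpace ℝ (Fin d),
      sgn (inner ℝ w x : ℝ) ≠ sgn (inner ℝ wstar x : ℝ) →
      ¬ (|(inner ℝ w x : ℝ)| ≤ σ) → (σ / T) ^ k ≤ (inner ℝ v x : ℝ) ^ k := by
    intro x hne hσx
    have hb := hvx x
    set a : ℝ := (inner ℝ w x : ℝ) with hadef
    set c : ℝ := (inner ℝ wstar x : ℝ) with hcdef
    set b : ℝ := (inner ℝ v x : ℝ) with hbdef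
    have habs : σ < |a| := lt_of_not_ge hσx
    have hsb : Real.sin θ * b = c - Real.cos θ * a := by
      rw [hb]; field_simp
    clear_value a c b
    clear hb hσx hband hmom hvx hident hσdef hTdef hAdef hθdef hvdef hcosθ h1 hnormsub hinner1 hvnorm
    clear_value v σ T A θ
    have hkey : σ / T ≤ |b| := by
      have h1 : σ * Real.cos θ ≤ |b| * Real.sin θ := by
        rcases le_or_gt 0 a with h0a | h0a <;> rcases le_or_gt 0 c with h0c | h0c
        · exact absurd (by simp [sgn, h0a, h0c]) hne
        · have ha : σ < a := by rwa [abs_of_nonneg h0a] at habs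
          have h2 : σ * Real.cos θ < a * Real.cos θ :=
            mul_lt_mul_of_pos_right ha hcospos
          have h3 : a * Real.cos θ ≤ -b * Real.sin θ := by nlinarith [hsb]
          have h4 : -b * Real.sin θ ≤ |b| * Real.sin θ :=
            mul_le_mul_of_nonneg_right (neg_le_abs b) hsinpos.le
          linarith
        · have ha : σ < -a := by rwa [abs_of_neg h0a] at habs
          have h2 : σ * Real.cos θ < -a * Real.cos θ :=
            mul_lt_mul_of_pos_right ha hcospos
          have h3 : -a * Real.cos θ ≤ b * Real.sin θ := by nlinarith [hsb]
          have h4 : b * Real.sin θ ≤ |b| * Real.sin θ :=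
            mul_le_mul_of_nonneg_right (le_abs_self b) hsinpos.le
          linarith
        · exact absurd (by simp [sgn, not_le.mpr h0a, not_le.mpr h0c]) hne
      rw [div_le_iff₀ htanpos, htan, ← mul_div_assoc, le_div_iff₀ hcospos]
      linarith
    calc (σ / T) ^ k ≤ |b| ^ k :=
          pow_le_pow_left₀ (by positivity) hkey k
      _ = b ^ k := hk.pow_abs b
  -- Markov
  obtain ⟨hint, hmomv⟩ := hmom v hvnorm
  set ε : ℝ := (σ / T) ^ k with hεdef
  have hεpos : 0 < ε := by positivity
  have hmarkov :
      (μ {x | ε ≤ (inner ℝ v x : ℝ) ^ k}).toReal ≤ A ^ ((k : ℝ) / 2) / ε := by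
    rw [le_div_iff₀ hεpos]
    calc (μ {x | ε ≤ (inner ℝ v x : ℝ) ^ k}).toReal * ε
        = ε * (μ {x | ε ≤ (inner ℝ v x : ℝ) ^ k}).toReal := mul_comm _ _
      _ ≤ ∫ x, (inner ℝ v x : ℝ) ^ k ∂μ :=
          mul_meas_ge_le_integral_of_nonneg
            (ae_of_all μ fun x => hk.pow_nonneg _) hint ε
      _ ≤ A ^ ((k : ℝ) / 2) := hmomv
  have hεeq : A ^ ((k : ℝ) / 2) / ε = A ^ ((k : ℝ) / 2) * T ^ k / σ ^ k := by
    rw [hεdef, div_pow, div_div_eq_mul_div]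
  -- inclusion
  have hsub : {x : EuclideanSpace ℝ (Fin d) | sgn (inner ℝ w x : ℝ) ≠ sgn (inner ℝ wstar x : ℝ)}
      ⊆ {x | |(inner ℝ w x : ℝ)| ≤ σ} ∪ {x | ε ≤ (inner ℝ v x : ℝ) ^ k} := by
    intro x hx
    by_cases h : |(inner ℝ w x : ℝ)| ≤ σ
    · exact Or.inl h
    · exact Or.inr (hgeo x hx h)
  constructor
  · calc (μ {x | sgn (inner ℝ w x : ℝ) ≠ sgn (inner ℝ wstar x : ℝ)}).toReal
        ≤ (μ ({x | |(inner ℝ w x : ℝ)| ≤ σ} ∪ {x | ε ≤ (inner ℝ v x : ℝ) ^ k})).toReal := by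
          apply ENNReal.toReal_mono (measure_ne_top μ _) (measure_mono hsub)
      _ ≤ ((μ {x | |(inner ℝ w x : ℝ)| ≤ σ}) + μ {x | ε ≤ (inner ℝ v x : ℝ) ^ k}).toReal := by
          apply ENNReal.toReal_mono
          · exact ENNReal.add_ne_top.mpr ⟨measure_ne_top μ _, measure_ne_top μ _⟩
          · exact measure_union_le _ _
      _ = (μ {x | |(inner ℝ w x : ℝ)| ≤ σ}).toReal
            + (μ {x | ε ≤ (inner ℝ v x : ℝ) ^ k}).toReal :=
          ENNReal.toReal_add (measure_ne_top μ _) (measure_ne_top μ _)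
      _ ≤ C₃ * σ + A ^ ((k : ℝ) / 2) * T ^ k / σ ^ k := by
          refine add_le_add hband ?_
          rw [← hεeq]; exact hmarkov
  · rw [hident]; ring
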